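/- arXiv:2105.00046 — 6 statements merged into one kernel-verified Lean document; each statement's English description precedes it below -/
import Mathlib

section
/- Let $\Omega \subset \mathbb{R}^2$ be bounded. For compact sets $H, K, L \subseteq \overline\Omega$ with $H \subseteq K \subseteq L$, the number of connected components of $L$ disjoint from $H$ is at most the sum of the number of connected components of $K$ disjoint from $H$ and the number of connected components of $L$ disjoint from $K$. (Triangle inequality for the component-counting cost $\alpha$.) -/
open Set MeasureTheory Metric Filter
open scoped ENNReal NNReal
open Classical

noncomputable section

abbrev Plane := EuclideanSpace ℝ (Fin 2)

/-- The set of connected components of `K`. -/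
def comps {X : Type*} [TopologicalSpace X] (K : Set X) : Set (Set X) :=
  {C | ∃ x ∈ K, C = connectedComponentIn K x}

/-- `alphaN H K` is the number of connected components of `K` disjoint from `H`
if `H ⊆ K`, and `+∞` otherwise. -/
def alphaN {X : Type*} [TopologicalSpace X] (H K : Set X) : ℕ∞ :=
  if H ⊆ K then {C | C ∈ comps K ∧ Disjoint C H}.encard else ⊤

/-- Triangle inequality for the component-counting cost `α`. -/
theorem stmt_0 (Ω : Set Plane) (hΩ : Bornology.IsBounded Ω)
    (H K L : Set Plane)
    (hH : IsCompact H) (hK : IsCompact K) (hL : IsCompact L)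
    (hHΩ : H ⊆ closure Ω) (hKΩ : K ⊆ closure Ω) (hLΩ : L ⊆ closure Ω)
    (hHK : H ⊆ K) (hKL : K ⊆ L) :
    alphaN H L ≤ alphaN H K + alphaN K L := by
  have hHL : H ⊆ L := hHK.trans hKL
  simp only [alphaN, if_pos hHK, if_pos hKL, if_pos hHL]
  set SL : Set (Set Plane) := {C | C ∈ comps L ∧ Disjoint C H} with hSL
  set SK : Set (Set Plane) := {C | C ∈ comps K ∧ Disjoint C H} with hSK
  set SLK : Set (Set Plane) := {C | C ∈ comps L ∧ Disjoint C K} with hSLK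
  set A : Set (Set Plane) := {C ∈ SL | Disjoint C K} with hA
  set B : Set (Set Plane) := {C ∈ SL | ¬ Disjoint C K} with hB
  have hunion : SL = A ∪ B := by
    ext C; by_cases h : Disjoint C K <;> simp [hSL, hA, hB, h]
  have h1 : SL.encard ≤ A.encard + B.encard := by
    rw [hunion]; exact Set.encard_union_le A B
  have hAle : A.encard ≤ SLK.encard := by
    apply Set.encard_le_encard
    rintro C ⟨hC, hdisj⟩
    exact ⟨hC.1, hdisj⟩
  -- injective map from B into SK
  set f : Set Plane → Set Plane := fun C =>
    if h : (C ∩ K).Nonempty then connectedComponentIn K h.some else ∅ with hf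
  have hkey : ∀ C ∈ B, ∃ x ∈ C ∩ K, f C = connectedComponentIn K x := by
    rintro C ⟨-, hnd⟩
    have hne : (C ∩ K).Nonempty := Set.not_disjoint_iff_nonempty_inter.mp hnd
    exact ⟨hne.some, hne.some_mem, by simp [hf, hne]⟩
  have hcomp : ∀ C ∈ B, ∀ x ∈ C ∩ K, connectedComponentIn K x ⊆ C := by
    rintro C ⟨⟨⟨y, hy, rfl⟩, -⟩, -⟩ x hx
    calc connectedComponentIn K x ⊆ connectedComponentIn L x :=
          connectedComponentIn_mono x hKL
      _ = connectedComponentIn L y := (connectedComponentIn_eq hx.1).symm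
  have hmaps : Set.MapsTo f B SK := by
    intro C hC
    obtain ⟨x, hx, hfx⟩ := hkey C hC
    refine ⟨⟨x, hx.2, hfx⟩, ?_⟩
    rw [hfx]
    exact hC.1.2.mono_left (hcomp C hC x hx)
  have hinj : Set.InjOn f B := by
    intro C hC C' hC' heq
    obtain ⟨x, hx, hfx⟩ := hkey C hC
    obtain ⟨x', hx', hfx'⟩ := hkey C' hC'
    have hxC : x' ∈ C := by
      apply hcomp C hC x hx
      rw [← hfx, heq, hfx']
      exact mem_connectedComponentIn hx'.2
    obtain ⟨⟨y, hy, rfl⟩, -⟩ := hC.1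
    obtain ⟨⟨y', hy', rfl⟩, -⟩ := hC'.1
    rw [connectedComponentIn_eq hxC, connectedComponentIn_eq hx'.1]
  have hBle : B.encard ≤ SK.encard := by
    calc B.encard = (f '' B).encard := (hinj.encard_image).symm
      _ ≤ SK.encard := Set.encard_le_encard hmaps.image_subset
  calc SL.encard ≤ A.encard + B.encard := h1
    _ ≤ SLK.encard + SK.encard := add_le_add hAle hBle
    _ = SK.encard + SLK.encard := add_comm _ _
end
end

section
/- Let $\Omega \subset \mathbb{R}^2$ be bounded, and let $H, K$ be compact subsets of $\overline\Omega$ with $H \subseteq K$. If $\mathcal{H}^1(K \setminus H) = 0$ and every connected component of $K$ intersects $H$, then $K = H$. (Separation property of the dissipation distance $\mathsf{d}$.) -/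
open Set MeasureTheory Metric Filter
open scoped ENNReal NNReal
open Classical

noncomputable section

/-- `ℝ≥0∞`-valued version of `alphaN`. -/
def alphaE {X : Type*} [TopologicalSpace X] (H K : Set X) : ℝ≥0∞ :=
  (alphaN H K : ℝ≥0∞)

/-- Total variation of the curve `K` induced by the cost `β`, over the set `E ⊆ ℝ`. -/
def VarOn {X : Type*} (β : Set X → Set X → ℝ≥0∞) (K : ℝ → Set X) (E : Set ℝ) : ℝ≥0∞ :=
  ⨆ (n : ℕ) (t : Fin (n+1) → ℝ) (_ : ∀ i, t i ∈ E) (_ : Monotone t),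
    ∑ i : Fin n, β (K (t i.castSucc)) (K (t i.succ))

/-- `ℕ∞`-valued total variation. -/
def VarOnN {X : Type*} (β : Set X → Set X → ℕ∞) (K : ℝ → Set X) (E : Set ℝ) : ℕ∞ :=
  ⨆ (n : ℕ) (t : Fin (n+1) → ℝ) (_ : ∀ i, t i ∈ E) (_ : Monotone t),
    ∑ i : Fin n, β (K (t i.castSucc)) (K (t i.succ))

/-- Left limit set `K(t-) = closure (⋃_{0 ≤ s < t} K(s))`. -/
def Kminus {X : Type*} [TopologicalSpace X] (K : ℝ → Set X) (t : ℝ) : Set X :=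
  closure (⋃ s ∈ Set.Ico (0:ℝ) t, K s)

/-- Right limit set `K(t+) = ⋂_{t < s ≤ T} K(s)`. -/
def Kplus {X : Type*} (K : ℝ → Set X) (T t : ℝ) : Set X :=
  ⋂ s ∈ Set.Ioc t T, K s


/-- Separation property of the dissipation distance: if `H ⊆ K`, `ℋ¹(K \ H) = 0` and
every connected component of `K` intersects `H`, then `K = H`. -/
theorem stmt_3 (Ω : Set Plane) (hΩ : Bornology.IsBounded Ω)
    (H K : Set Plane)
    (hH : IsCompact H) (hK : IsCompact K)
    (hHΩ : H ⊆ closure Ω) (hKΩ : K ⊆ closure Ω) (hHK : H ⊆ K)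
    (hmeas : μH[1] (K \ H) = 0)
    (hcomp : ∀ x ∈ K, (connectedComponentIn K x ∩ H).Nonempty) :
    K = H := by

  by_contra hne
  obtain ⟨x0, hx0K, hx0H⟩ : (K \ H).Nonempty :=
    Set.sdiff_nonempty.mpr (fun h => hne (h.antisymm hHK))
  obtain ⟨ρ, hρ, hball⟩ := Metric.isOpen_iff.1 hH.isClosed.isOpen_compl x0 hx0H
  set C := connectedComponentIn K x0 with hC
  obtain ⟨y, hyC, hyH⟩ := hcomp x0 hx0K
  have hx0C : x0 ∈ C := mem_connectedComponentIn hx0K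
  have hdist : ρ ≤ dist y x0 := by
    by_contra hlt
    exact hball (Metric.mem_ball.2 (lt_of_not_ge hlt)) hyH
  set f : Plane → ℝ := fun z => dist z x0 with hf
  have hlip : LipschitzWith 1 f := LipschitzWith.dist_left x0
  set S := C ∩ Metric.ball x0 ρ with hS
  have hSsub : S ⊆ K \ H := fun z hz =>
    ⟨connectedComponentIn_subset K x0 hz.1, fun hzH => hball hz.2 hzH⟩
  have himg : Set.Ico (0:ℝ) ρ ⊆ f '' S := by
    intro c hc
    have hconn : IsPreconnected (f '' C) :=
      isPreconnected_connectedComponentIn.image f (hlip.continuous.continuousOn)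
    have h0 : (0:ℝ) ∈ f '' C := ⟨x0, hx0C, by simp [hf]⟩
    have hd : dist y x0 ∈ f '' C := ⟨y, hyC, rfl⟩
    have hIcc : Set.Icc (0:ℝ) (dist y x0) ⊆ f '' C := hconn.Icc_subset h0 hd
    obtain ⟨z, hzC, hzc⟩ := hIcc ⟨hc.1, le_trans (le_of_lt hc.2) hdist⟩
    exact ⟨z, ⟨hzC, Metric.mem_ball.2 (by show f z < ρ; rw [hzc]; exact hc.2)⟩, hzc⟩
  have hvol : (ENNReal.ofReal ρ) ≤ μH[1] (f '' S) := by
    calc ENNReal.ofReal ρ = volume (Set.Ico (0:ℝ) ρ) := by simp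
    _ = μH[1] (Set.Ico (0:ℝ) ρ) := by rw [MeasureTheory.hausdorffMeasure_real]
    _ ≤ μH[1] (f '' S) := measure_mono himg
  have hle : μH[1] (f '' S) ≤ μH[1] S := by
    simpa using hlip.hausdorffMeasure_image_le (by norm_num : (0:ℝ) ≤ 1) S
  have hzero : μH[1] S = 0 := le_antisymm (hmeas ▸ measure_mono hSsub) (zero_le)
  rw [hzero] at hle
  have := le_trans hvol hle
  simp [ENNReal.ofReal_eq_zero, not_lt.2] at this
  linarith
end
end

section
/- Let $X$ be a compact metric space, $H \subseteq X$ compact, and $(K_n)_n$ compact subsets of $X$ converging to $K$ in Hausdorff distance. Let $f : X \to [0,\infty)$ be lower semicontinuous and suppose that for every open $U \subseteq X$ one has $\mathcal{H}^1((K \setminus H) \cap U) \le \liminf_n \mathcal{H}^1((K_n \setminus H) \cap U)$. Then $\int_{K\setminus H} f\, d\mathcal{H}^1 \le \liminf_n \int_{K_n \setminus H} f\, d\mathcal{H}^1$. -/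
open Set MeasureTheory Metric Filter
open scoped ENNReal NNReal
open Classical

noncomputable section

/-- Lower semicontinuity of integrals of nonnegative lower semicontinuous functions
against `ℋ¹` restricted to `K_n \ H`, given the localized Gołąb-type inequality. -/
theorem stmt_7 {X : Type*} [MetricSpace X] [CompactSpace X] [MeasurableSpace X]
    [BorelSpace X]
    (H K : Set X) (Kn : ℕ → Set X) (f : X → ℝ≥0)
    (hH : IsCompact H) (hK : IsCompact K) (hKn : ∀ n, IsCompact (Kn n))
    (hconv : Tendsto (fun n => hausdorffDist (Kn n) K) atTop (nhds 0))
    (hf : LowerSemicontinuous f)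
    (hloc : ∀ U : Set X, IsOpen U →
      μH[1] ((K \ H) ∩ U) ≤ Filter.liminf (fun n => μH[1] ((Kn n \ H) ∩ U)) Filter.atTop) :
    ∫⁻ x in K \ H, (f x : ℝ≥0∞) ∂μH[1]
      ≤ Filter.liminf (fun n => ∫⁻ x in Kn n \ H, (f x : ℝ≥0∞) ∂μH[1]) Filter.atTop := by
  have hfm : Measurable f := hf.measurable
  have hfr : Measurable (fun x => (f x : ℝ)) := NNReal.continuous_coe.measurable.comp hfm
  have hmeas : ∀ t : ℝ, MeasurableSet {x : X | t < (f x : ℝ)} := fun t =>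
    measurableSet_lt measurable_const hfr
  have layer : ∀ S : Set X, ∫⁻ x in S, (f x : ℝ≥0∞) ∂μH[1]
      = ∫⁻ t in Set.Ioi (0:ℝ), μH[1] ({x : X | t < (f x : ℝ)} ∩ S) := by
    intro S
    have h := lintegral_eq_lintegral_meas_lt ((μH[1] : Measure X).restrict S)
      (f := fun x => (f x : ℝ)) (Filter.Eventually.of_forall fun x => (f x).coe_nonneg)
      hfr.aemeasurable
    simp only [ENNReal.ofReal_coe_nnreal] at h
    rw [h]
    refine setLIntegral_congr_fun measurableSet_Ioi ?_
    intro t _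
    exact Measure.restrict_apply (hmeas t)
  have hopen : ∀ t : ℝ, 0 < t → IsOpen {x : X | t < (f x : ℝ)} := by
    intro t ht
    have : {x : X | t < (f x : ℝ)} = f ⁻¹' Set.Ioi t.toNNReal := by
      ext x
      simp only [Set.mem_setOf_eq, Set.mem_preimage, Set.mem_Ioi]
      exact (Real.toNNReal_lt_iff_lt_coe ht.le).symm
    rw [this]
    exact lowerSemicontinuous_iff_isOpen_preimage.mp hf _
  rw [layer (K \ H)]
  have step1 : ∫⁻ t in Set.Ioi (0:ℝ), μH[1] ({x : X | t < (f x : ℝ)} ∩ (K \ H))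
      ≤ ∫⁻ t in Set.Ioi (0:ℝ),
        Filter.liminf (fun n => μH[1] ({x : X | t < (f x : ℝ)} ∩ (Kn n \ H))) Filter.atTop := by
    refine setLIntegral_mono' measurableSet_Ioi fun t ht => ?_
    have := hloc _ (hopen t ht)
    simpa [Set.inter_comm] using this
  refine step1.trans ?_
  have step2 : ∫⁻ t in Set.Ioi (0:ℝ),
        Filter.liminf (fun n => μH[1] ({x : X | t < (f x : ℝ)} ∩ (Kn n \ H))) Filter.atTop
      ≤ Filter.liminf
        (fun n => ∫⁻ t in Set.Ioi (0:ℝ), μH[1] ({x : X | t < (f x : ℝ)} ∩ (Kn n \ H)))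
        Filter.atTop := by
    apply lintegral_liminf_le
    intro n
    have hanti : Antitone (fun t : ℝ => μH[1] ({x : X | t < (f x : ℝ)} ∩ (Kn n \ H))) := by
      intro a b hab
      exact measure_mono (Set.inter_subset_inter_left _ fun x hx => lt_of_le_of_lt hab hx)
    exact hanti.measurable
  refine step2.trans ?_
  refine le_of_eq (Filter.liminf_congr (Filter.Eventually.of_forall fun n => ?_))
  exact (layer (Kn n \ H)).symm
end
end

section
/- Let $K : [0,T] \to \mathcal{K}(\overline\Omega)$ be monotone with respect to inclusion and suppose the function $V(s) := \mathrm{Var}_{\mathsf{d}}(K,[0,s])$ is finite on $[0,T]$, where $\mathsf{d}$ is lower semicontinuous with respect to Hausdorff convergence and satisfies the triangle inequality. Then for every $t \in (0,T]$, $\lim_{s \to t^-} \mathsf{d}(K(s), K(t-)) = 0$, where $K(t-)$ is the left Hausdorff limit of $K$ at $t$. -/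
open Set MeasureTheory Metric Filter
open scoped ENNReal NNReal
open Classical

noncomputable section

lemma my_varOn_mono {X : Type*} (β : Set X → Set X → ℝ≥0∞) (K : ℝ → Set X) {E F : Set ℝ}
    (h : E ⊆ F) : VarOn β K E ≤ VarOn β K F := by
  refine iSup_le fun n => iSup_le fun t => iSup_le fun ht => iSup_le fun hm => ?_
  exact le_iSup_of_le n <| le_iSup_of_le t <| le_iSup_of_le (fun i => h (ht i)) <|
    le_iSup_of_le hm le_rfl

lemma my_varOn_step {X : Type*} (β : Set X → Set X → ℝ≥0∞) (K : ℝ → Set X)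
    {a b : ℝ} (h0a : 0 ≤ a) (hab : a ≤ b)
    (n : ℕ) (t : Fin (n+1) → ℝ) (ht : ∀ i, t i ∈ Set.Icc 0 a) (hm : Monotone t) :
    (∑ i : Fin n, β (K (t i.castSucc)) (K (t i.succ))) + β (K a) (K b)
      ≤ VarOn β K (Set.Icc 0 b) := by
  set t' : Fin (n+2+1) → ℝ := Fin.snoc (Fin.snoc t a) b with ht'
  have hmem : ∀ i, t' i ∈ Set.Icc (0:ℝ) b := by
    intro i
    induction i using Fin.lastCases with
    | last =>
        simp only [t', Fin.snoc_last]
        exact ⟨le_trans h0a hab, le_rfl⟩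
    | cast j =>
      induction j using Fin.lastCases with
      | last =>
        simp only [t', Fin.snoc_castSucc, Fin.snoc_last]
        exact ⟨h0a, hab⟩
      | cast k =>
        simp only [t', Fin.snoc_castSucc]
        exact ⟨(ht k).1, le_trans (ht k).2 hab⟩
  have hmono : Monotone t' := by
    rw [Fin.monotone_iff_le_succ]
    intro i
    induction i using Fin.lastCases with
    | last =>
      simp only [t', Fin.succ_last, Fin.snoc_last, Fin.snoc_castSucc]
      exact hab
    | cast j =>
      rw [Fin.succ_castSucc]
      induction j using Fin.lastCases with
      | last =>
        simp only [t', Fin.succ_last, Fin.snoc_castSucc, Fin.snoc_last]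
        exact (ht _).2
      | cast k =>
        rw [Fin.succ_castSucc]
        simp only [t', Fin.snoc_castSucc]
        exact hm (Fin.castSucc_le_succ k)
  have hsum : (∑ i : Fin n, β (K (t i.castSucc)) (K (t i.succ)))
      + β (K (t (Fin.last n))) (K a) + β (K a) (K b)
      = ∑ i : Fin (n+2), β (K (t' i.castSucc)) (K (t' i.succ)) := by
    rw [Fin.sum_univ_castSucc (n := n+1), Fin.sum_univ_castSucc (n := n)]
    simp only [t', Fin.succ_castSucc, Fin.snoc_castSucc, Fin.succ_last, Fin.snoc_last]
  calc (∑ i : Fin n, β (K (t i.castSucc)) (K (t i.succ))) + β (K a) (K b)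
      ≤ (∑ i : Fin n, β (K (t i.castSucc)) (K (t i.succ)))
        + β (K (t (Fin.last n))) (K a) + β (K a) (K b) := by
        gcongr
        exact le_add_right le_rfl
    _ = ∑ i : Fin (n+2), β (K (t' i.castSucc)) (K (t' i.succ)) := hsum
    _ ≤ VarOn β K (Set.Icc 0 b) :=
        le_iSup_of_le (n+2) <| le_iSup_of_le t' <| le_iSup_of_le hmem <|
          le_iSup_of_le hmono le_rfl

lemma my_varOn_snoc {X : Type*} (β : Set X → Set X → ℝ≥0∞) (K : ℝ → Set X)
    {a b : ℝ} (h0a : 0 ≤ a) (hab : a ≤ b) :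
    VarOn β K (Set.Icc 0 a) + β (K a) (K b) ≤ VarOn β K (Set.Icc 0 b) := by
  have h2 : β (K a) (K b) ≤ VarOn β K (Set.Icc 0 b) := by
    simpa using my_varOn_step β K h0a hab 0 (fun _ => a)
      (fun _ => ⟨h0a, le_rfl⟩) monotone_const
  rcases eq_or_ne (β (K a) (K b)) ⊤ with hc | hc
  · have : VarOn β K (Set.Icc 0 b) = ⊤ := top_le_iff.mp (hc ▸ h2)
    simp [this]
  · have h1 : VarOn β K (Set.Icc 0 a) ≤ VarOn β K (Set.Icc 0 b) - β (K a) (K b) := by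
      refine iSup_le fun n => iSup_le fun t => iSup_le fun ht => iSup_le fun hm => ?_
      exact ENNReal.le_sub_of_add_le_right hc (my_varOn_step β K h0a hab n t ht hm)
    calc VarOn β K (Set.Icc 0 a) + β (K a) (K b)
        ≤ (VarOn β K (Set.Icc 0 b) - β (K a) (K b)) + β (K a) (K b) := by gcongr
      _ = VarOn β K (Set.Icc 0 b) := tsub_add_cancel_of_le h2

/-- If the `𝖽`-total variation of a monotone curve is finite and `𝖽` is lower
semicontinuous w.r.t. Hausdorff convergence and satisfies the triangle inequality,
then `𝖽(K(s), K(t-)) → 0` as `s → t⁻`. -/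
theorem stmt_12 (Ω : Set Plane) (hΩ : Bornology.IsBounded Ω) (T : ℝ) (hT : 0 < T)
    (d : Set Plane → Set Plane → ℝ≥0∞)
    (htri : ∀ A B C : Set Plane, d A C ≤ d A B + d B C)
    (hlsc : ∀ (Hn Kn : ℕ → Set Plane) (H K' : Set Plane),
      (∀ n, IsCompact (Hn n)) → (∀ n, IsCompact (Kn n)) → IsCompact H → IsCompact K' →
      Tendsto (fun n => hausdorffDist (Hn n) H) atTop (nhds 0) →
      Tendsto (fun n => hausdorffDist (Kn n) K') atTop (nhds 0) →
      d H K' ≤ Filter.liminf (fun n => d (Hn n) (Kn n)) Filter.atTop)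
    (K : ℝ → Set Plane)
    (hcomp : ∀ t ∈ Set.Icc (0:ℝ) T, IsCompact (K t))
    (hsub : ∀ t ∈ Set.Icc (0:ℝ) T, K t ⊆ closure Ω)
    (hmono : ∀ s t : ℝ, s ∈ Set.Icc (0:ℝ) T → t ∈ Set.Icc (0:ℝ) T → s ≤ t → K s ⊆ K t)
    (hvar : ∀ s ∈ Set.Icc (0:ℝ) T, VarOn d K (Set.Icc 0 s) ≠ ⊤) :
    ∀ t ∈ Set.Ioc (0:ℝ) T,
      Tendsto (fun s => d (K s) (Kminus K t)) (nhdsWithin t (Set.Ico 0 t)) (nhds 0) := by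
  intro t ht
  obtain ⟨ht0, htT⟩ := ht
  have htIcc : t ∈ Set.Icc (0:ℝ) T := ⟨ht0.le, htT⟩
  have hIcoIcc : Set.Ico (0:ℝ) t ⊆ Set.Icc 0 T := fun s hs => ⟨hs.1, hs.2.le.trans htT⟩
  set A := Kminus K t with hA
  set U := ⋃ s ∈ Set.Ico (0:ℝ) t, K s with hUdef
  have hAU : A = closure U := rfl
  have hUsub : U ⊆ closure Ω := by
    simp only [hUdef, Set.iUnion_subset_iff]
    intro s hs
    exact hsub s (hIcoIcc hs)
  have hAsub : A ⊆ closure Ω := by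
    rw [hAU]
    exact closure_minimal hUsub isClosed_closure
  have hAcomp : IsCompact A :=
    Metric.isCompact_of_isClosed_isBounded (hAU ▸ isClosed_closure) (hΩ.closure.subset hAsub)
  have hKA : ∀ s ∈ Set.Ico (0:ℝ) t, K s ⊆ A := fun s hs =>
    (Set.subset_biUnion_of_mem hs).trans (hAU ▸ subset_closure)
  -- Hausdorff convergence of K s to A as s → t⁻
  have hHaus : Tendsto (fun s => hausdorffDist (K s) A) (nhdsWithin t (Set.Ico 0 t)) (nhds 0) := by
    rw [Metric.tendsto_nhds]
    intro ε hε
    obtain ⟨u, hu, hcover⟩ : ∃ u ∈ Set.Ico (0:ℝ) t, A ⊆ Metric.thickening (ε/2) (K u) := by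
      have hopen : ∀ s : Set.Ico (0:ℝ) t, IsOpen (Metric.thickening (ε/2) (K (s:ℝ))) :=
        fun _ => Metric.isOpen_thickening
      have hcov : A ⊆ ⋃ s : Set.Ico (0:ℝ) t, Metric.thickening (ε/2) (K (s:ℝ)) := by
        intro x hx
        have hx' : x ∈ Metric.thickening (ε/2) U :=
          Metric.closure_subset_thickening (by linarith) U (hAU ▸ hx)
        obtain ⟨y, hyU, hd⟩ := Metric.mem_thickening_iff.1 hx'
        obtain ⟨s, hs, hyK⟩ := Set.mem_iUnion₂.1 hyU
        exact Set.mem_iUnion.2 ⟨⟨s, hs⟩, Metric.mem_thickening_iff.2 ⟨y, hyK, hd⟩⟩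
      obtain ⟨fs, hfs⟩ := hAcomp.elim_finite_subcover _ hopen hcov
      rcases fs.eq_empty_or_nonempty with hfe | hfne
      · refine ⟨0, ⟨le_rfl, ht0⟩, fun x hx => ?_⟩
        have := hfs hx
        simp [hfe] at this
      · obtain ⟨i₀, _, hmax⟩ := fs.exists_max_image (fun i => (i : ℝ)) hfne
        refine ⟨(i₀ : ℝ), i₀.2, fun x hx => ?_⟩
        obtain ⟨i, hi, hxi⟩ := Set.mem_iUnion₂.1 (hfs hx)
        have hsub' : K (i:ℝ) ⊆ K (i₀:ℝ) :=
          hmono _ _ (hIcoIcc i.2) (hIcoIcc i₀.2) (hmax i hi)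
        exact Metric.thickening_subset_of_subset _ hsub' hxi
    filter_upwards [eventually_mem_nhdsWithin,
      (eventually_gt_nhds hu.2).filter_mono nhdsWithin_le_nhds] with s hs hus
    have hKsA : K s ⊆ A := hKA s hs
    have hd : hausdorffDist (K s) A ≤ ε/2 := by
      apply Metric.hausdorffDist_le_of_mem_dist (by linarith)
      · intro x hx
        exact ⟨x, hKsA hx, by rw [dist_self]; linarith⟩
      · intro y hy
        have hy' : y ∈ Metric.thickening (ε/2) (K s) :=
          Metric.thickening_subset_of_subset _
            (hmono _ _ (hIcoIcc hu) (hIcoIcc hs) hus.le) (hcover hy)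
        obtain ⟨z, hz, hdz⟩ := Metric.mem_thickening_iff.1 hy'
        exact ⟨z, hz, hdz.le⟩
    have : dist (hausdorffDist (K s) A) 0 = hausdorffDist (K s) A := by
      rw [Real.dist_eq, sub_zero, abs_of_nonneg Metric.hausdorffDist_nonneg]
    rw [this]
    linarith
  -- the variation function
  set V : ℝ → ℝ≥0∞ := fun s => VarOn d K (Set.Icc 0 s) with hVdef
  have hVmono : ∀ a b : ℝ, a ≤ b → V a ≤ V b := fun a b h =>
    my_varOn_mono d K (Set.Icc_subset_Icc_right h)
  set L : ℝ≥0∞ := ⨆ s : Set.Ico (0:ℝ) t, V (s:ℝ) with hLdef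
  have hLle : L ≤ V t := iSup_le fun s => hVmono _ _ s.2.2.le
  have hLtop : L ≠ ⊤ := fun h => hvar t htIcc (top_le_iff.1 (h ▸ hLle))
  -- key estimate via lower semicontinuity
  have hdle : ∀ s ∈ Set.Ico (0:ℝ) t, d (K s) A ≤ L - V s := by
    intro s hs
    have hst : s < t := hs.2
    set σ : ℕ → ℝ := fun n => t - (t - s) * (1/((n:ℝ)+1)) with hσdef
    have hσmem : ∀ n : ℕ, σ n ∈ Set.Ico (0:ℝ) t ∧ s ≤ σ n := by
      intro n
      have h1 : (0:ℝ) < (n:ℝ)+1 := by positivity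
      have h2 : (0:ℝ) < t - s := by linarith
      have hd1 : 0 < (t - s) * (1/((n:ℝ)+1)) := by positivity
      have hd2 : (t - s) * (1/((n:ℝ)+1)) ≤ t - s := by
        rw [mul_one_div]
        exact div_le_self h2.le (by linarith)
      have hsσ : s ≤ σ n := by simp only [hσdef]; linarith
      exact ⟨⟨le_trans hs.1 hsσ, by simp only [hσdef]; linarith⟩, hsσ⟩
    have hσt : Tendsto σ atTop (nhds t) := by
      have h0 : Tendsto (fun n : ℕ => (t - s) * (1/((n:ℝ)+1))) atTop (nhds 0) := by
        simpa using tendsto_one_div_add_atTop_nhds_zero_nat.const_mul (t - s)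
      simpa [hσdef, one_div] using ((tendsto_const_nhds (x := t) (f := (atTop : Filter ℕ))).sub h0)
    have hσn : Tendsto σ atTop (nhdsWithin t (Set.Ico 0 t)) :=
      tendsto_nhdsWithin_of_tendsto_nhds_of_eventually_within σ hσt
        (Eventually.of_forall fun n => (hσmem n).1)
    have hlim := hlsc (fun _ => K s) (fun n => K (σ n)) (K s) A
      (fun _ => hcomp s (hIcoIcc hs)) (fun n => hcomp _ (hIcoIcc (hσmem n).1))
      (hcomp s (hIcoIcc hs)) hAcomp
      (by simpa [Metric.hausdorffDist_self_zero] using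
        (tendsto_const_nhds (x := (0:ℝ)) (f := (atTop : Filter ℕ))))
      (hHaus.comp hσn)
    refine hlim.trans (Filter.liminf_le_of_frequently_le' (Frequently.of_forall fun n => ?_))
    have h1 : d (K s) (K (σ n)) ≤ V (σ n) - V s :=
      ENNReal.le_sub_of_add_le_left (hvar s (hIcoIcc hs))
        (my_varOn_snoc d K hs.1 (hσmem n).2)
    refine h1.trans (tsub_le_tsub_right ?_ _)
    exact le_iSup_of_le (⟨σ n, (hσmem n).1⟩ : Set.Ico (0:ℝ) t) le_rfl
  -- conclude
  rw [ENNReal.tendsto_nhds_zero]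
  intro ε hε
  obtain ⟨s₀, hs₀, hs₀ε⟩ : ∃ s₀ ∈ Set.Ico (0:ℝ) t, L ≤ V s₀ + ε := by
    rcases le_or_gt L ε with h | h
    · exact ⟨0, ⟨le_rfl, ht0⟩, h.trans le_add_self⟩
    · have hLpos : L ≠ 0 := ((zero_le : (0:ℝ≥0∞) ≤ ε).trans_lt h).ne'
      have hlt : L - ε < L := ENNReal.sub_lt_self hLtop hLpos hε.ne'
      rw [hLdef, lt_iSup_iff] at hlt
      obtain ⟨⟨s₀, hs₀⟩, hlt⟩ := hlt
      refine ⟨s₀, hs₀, ?_⟩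
      calc L = (L - ε) + ε := (tsub_add_cancel_of_le h.le).symm
        _ ≤ V s₀ + ε := add_le_add_left hlt.le ε
  filter_upwards [eventually_mem_nhdsWithin,
    (eventually_gt_nhds hs₀.2).filter_mono nhdsWithin_le_nhds] with s hsmem hs₀s
  calc d (K s) A ≤ L - V s := hdle s hsmem
    _ ≤ L - V s₀ := tsub_le_tsub_left (hVmono _ _ hs₀s.le) L
    _ ≤ ε := tsub_le_iff_right.2 (by rwa [add_comm])
end
end

section
/- Let $\Omega \subset \mathbb{R}^2$ be bounded and let $K : [0,T] \to \mathcal{K}_{\mathrm{fin}}(\overline\Omega)$ be monotone with respect to inclusion. For the dissipation distance $\mathsf{d}(H,K') = \mathcal{H}^1(K'\setminus H) + \lambda\,\alpha(H,K')$ (for $H \subseteq K'$; $+\infty$ otherwise), the total variation satisfies, for every $t \in [0,T]$: $\mathrm{Var}_{\mathsf{d}}(K,[0,t]) = \mathcal{H}^1(K(t)\setminus K(0)) + \lambda\,\mathrm{Var}_\alpha(K,[0,t])$. -/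
open Set MeasureTheory Metric Filter
open scoped ENNReal NNReal
open Classical

noncomputable section

/-- The dissipation distance `𝖽(H,K') = ℋ¹(K' \ H) + λ α(H,K')` (for `H ⊆ K'`). -/
def dd (lam : ℝ≥0∞) (H K : Set Plane) : ℝ≥0∞ :=
  if H ⊆ K then μH[1] (K \ H) + lam * alphaE H K else ⊤

lemma add_iSup_le' {ι : Sort*} {c D : ℝ≥0∞} {f : ι → ℝ≥0∞}
    (hc : c ≤ D) (h : ∀ i, c + f i ≤ D) : c + ⨆ i, f i ≤ D := by
  rcases isEmpty_or_nonempty ι with hι | hι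
  · simpa using hc
  · rw [ENNReal.add_iSup]; exact iSup_le h

lemma telescope_meas {X : Type*} [MeasurableSpace X] (μ : MeasureTheory.Measure X) :
    ∀ (m : ℕ) (A : Fin (m+1) → Set X), (∀ i, MeasurableSet (A i)) → Monotone A →
      ∑ i : Fin m, μ (A i.succ \ A i.castSucc) = μ (A (Fin.last m) \ A 0) := by
  intro m
  induction m with
  | zero => intro A _ _; simp [Fin.last]
  | succ m ih =>
      intro A hmeas hmono
      rw [Fin.sum_univ_castSucc]
      have hmid : ∑ i : Fin m, μ (A i.castSucc.succ \ A i.castSucc.castSucc)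
          = μ (A (Fin.last m).castSucc \ A 0) := by
        have := ih (fun j => A j.castSucc) (fun j => hmeas _)
          (fun a b hab => hmono (Fin.castSucc_le_castSucc_iff.mpr hab))
        simpa [-Fin.castSucc_succ, Fin.succ_castSucc] using this
      rw [hmid, Fin.succ_last]
      have h1 : A 0 ⊆ A (Fin.last m).castSucc := hmono (Fin.zero_le _)
      have h2 : A (Fin.last m).castSucc ⊆ A (Fin.last (m+1)) := hmono (Fin.le_last _)
      have key : A (Fin.last (m+1)) \ A (Fin.last m).castSucc ∪ A (Fin.last m).castSucc \ A 0
          = A (Fin.last (m+1)) \ A 0 := Set.diff_union_diff_cancel h2 h1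
      have hdisj : Disjoint (A (Fin.last (m+1)) \ A (Fin.last m).castSucc)
          (A (Fin.last m).castSucc \ A 0) :=
        Set.disjoint_of_subset_right Set.diff_subset disjoint_sdiff_left
      rw [← key, MeasureTheory.measure_union hdisj ((hmeas _).diff (hmeas _)), add_comm]

lemma sum_le_VarOn {X : Type*} (β : Set X → Set X → ℝ≥0∞) (K : ℝ → Set X) (E : Set ℝ)
    {n : ℕ} {s : Fin (n+1) → ℝ} (h1 : ∀ i, s i ∈ E) (h2 : Monotone s) :
    ∑ i : Fin n, β (K (s i.castSucc)) (K (s i.succ)) ≤ VarOn β K E := by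
  unfold VarOn
  apply le_iSup_of_le n
  apply le_iSup_of_le s
  apply le_iSup_of_le h1
  apply le_iSup_of_le h2
  exact le_rfl

set_option maxHeartbeats 1000000 in
/-- Explicit formula for the `𝖽`-total variation of a monotone `𝒦_fin`-valued curve:
`Var_𝖽(K,[0,t]) = ℋ¹(K(t) \ K(0)) + λ Var_α(K,[0,t])`. -/
theorem stmt_14 (Ω : Set Plane) (hΩ : Bornology.IsBounded Ω) (T : ℝ) (hT : 0 < T)
    (lam : ℝ≥0∞) (hlam : 0 < lam) (hlam' : lam ≠ ⊤)
    (K : ℝ → Set Plane)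
    (hcomp : ∀ t ∈ Set.Icc (0:ℝ) T, IsCompact (K t))
    (hsub : ∀ t ∈ Set.Icc (0:ℝ) T, K t ⊆ closure Ω)
    (hfinH : ∀ t ∈ Set.Icc (0:ℝ) T, μH[1] (K t) < ⊤)
    (hfinC : ∀ t ∈ Set.Icc (0:ℝ) T, alphaN ∅ (K t) < ⊤)
    (hmono : ∀ s t : ℝ, s ∈ Set.Icc (0:ℝ) T → t ∈ Set.Icc (0:ℝ) T → s ≤ t → K s ⊆ K t) :
    ∀ t ∈ Set.Icc (0:ℝ) T,
      VarOn (dd lam) K (Set.Icc 0 t)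
        = μH[1] (K t \ K 0) + lam * VarOn alphaE K (Set.Icc 0 t) := by
  intro t ht
  obtain ⟨ht0, htT⟩ := ht
  have hIcc : Set.Icc (0:ℝ) t ⊆ Set.Icc 0 T := Set.Icc_subset_Icc le_rfl htT
  have h0T : (0:ℝ) ∈ Set.Icc (0:ℝ) T := ⟨le_rfl, hT.le⟩
  have htmem : t ∈ Set.Icc (0:ℝ) t := ⟨ht0, le_rfl⟩
  have h0mem : (0:ℝ) ∈ Set.Icc (0:ℝ) t := ⟨le_rfl, ht0⟩
  have hmeas : ∀ s ∈ Set.Icc (0:ℝ) T, MeasurableSet (K s) :=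
    fun s hs => (hcomp s hs).isClosed.measurableSet
  have hdd : ∀ u v : ℝ, u ∈ Set.Icc (0:ℝ) T → v ∈ Set.Icc (0:ℝ) T → u ≤ v →
      dd lam (K u) (K v) = μH[1] (K v \ K u) + lam * alphaE (K u) (K v) :=
    fun u v hu hv huv => if_pos (hmono u v hu hv huv)
  set c : ℝ≥0∞ := μH[1] (K t \ K 0) with hc
  -- generic decomposition of a partition sum
  have hsplit : ∀ (n : ℕ) (s : Fin (n+1) → ℝ), (∀ i, s i ∈ Set.Icc (0:ℝ) t) → Monotone s →
      ∑ i : Fin n, dd lam (K (s i.castSucc)) (K (s i.succ))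
        = μH[1] (K (s (Fin.last n)) \ K (s 0))
          + lam * ∑ i : Fin n, alphaE (K (s i.castSucc)) (K (s i.succ)) := by
    intro n s h1 h2
    have hsT : ∀ i, s i ∈ Set.Icc (0:ℝ) T := fun i => hIcc (h1 i)
    have e1 : ∑ i : Fin n, dd lam (K (s i.castSucc)) (K (s i.succ))
        = ∑ i : Fin n, μH[1] (K (s i.succ) \ K (s i.castSucc))
          + lam * ∑ i : Fin n, alphaE (K (s i.castSucc)) (K (s i.succ)) := by
      rw [Finset.mul_sum, ← Finset.sum_add_distrib]
      exact Finset.sum_congr rfl fun i _ =>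
        hdd _ _ (hsT _) (hsT _) (h2 (Fin.castSucc_lt_succ (i := i)).le)
    rw [e1, telescope_meas _ n (fun j => K (s j)) (fun j => hmeas _ (hsT j))
      (fun a b hab => hmono _ _ (hsT a) (hsT b) (h2 hab))]
  -- c ≤ D, via the two-point partition (0, t)
  have hcD : c ≤ VarOn (dd lam) K (Set.Icc 0 t) := by
    set s : Fin 2 → ℝ := fun i => if i = 0 then 0 else t with hs
    have hmem : ∀ i, s i ∈ Set.Icc (0:ℝ) t := by
      intro i; by_cases h : i = 0
      · simpa [hs, h] using h0mem
      · simpa [hs, h] using htmem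
    have hmon : Monotone s := by
      intro a b hab
      by_cases hb : b = 0
      · have ha : a = 0 := le_antisymm (hb ▸ hab) (Fin.zero_le a)
        simp [hs, ha, hb]
      · by_cases ha : a = 0 <;> simp [hs, ha, hb, ht0]
    have : c ≤ ∑ i : Fin 1, dd lam (K (s i.castSucc)) (K (s i.succ)) := by
      rw [hsplit 1 s hmem hmon]
      have hlast : s (Fin.last 1) = t := if_neg (by decide)
      have h0 : s 0 = 0 := if_pos rfl
      rw [hlast, h0]
      exact le_self_add
    exact this.trans (sum_le_VarOn _ _ _ hmem hmon)
  apply le_antisymm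
  · -- ≤ : each partition sum is bounded by the RHS
    refine iSup_le fun n => iSup_le fun s => iSup_le fun h1 => iSup_le fun h2 => ?_
    rw [hsplit n s h1 h2]
    refine add_le_add (measure_mono (Set.diff_subset_diff
        (hmono _ _ (hIcc (h1 _)) ⟨ht0, htT⟩ (h1 _).2)
        (hmono _ _ h0T (hIcc (h1 _)) (h1 _).1))) ?_
    exact mul_le_mul_right (sum_le_VarOn _ _ _ h1 h2) _
  · -- ≥ : extend each α-partition by the endpoints 0 and t
    rw [show lam * VarOn alphaE K (Set.Icc 0 t)
        = ⨆ (n : ℕ) (s : Fin (n+1) → ℝ) (_ : ∀ i, s i ∈ Set.Icc (0:ℝ) t) (_ : Monotone s),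
            lam * ∑ i : Fin n, alphaE (K (s i.castSucc)) (K (s i.succ)) by
      simp only [VarOn, ENNReal.mul_iSup]]
    refine add_iSup_le' hcD fun n => add_iSup_le' hcD fun s => add_iSup_le' hcD fun h1 =>
      add_iSup_le' hcD fun h2 => ?_
    -- extended partition
    set u : Fin (n+2) → ℝ := Fin.snoc s t with hu
    set s' : Fin (n+3) → ℝ := Fin.cons 0 u with hs'
    have hs'0 : s' 0 = 0 := rfl
    have hs'succ : ∀ j : Fin (n+2), s' j.succ = u j := fun j => Fin.cons_succ _ _ _
    have humem : ∀ j, u j ∈ Set.Icc (0:ℝ) t := by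
      intro j
      refine Fin.lastCases ?_ ?_ j
      · simp [hu, htmem]
      · intro i; simpa [hu] using h1 i
    have hmem : ∀ j, s' j ∈ Set.Icc (0:ℝ) t := by
      intro j
      refine Fin.cases ?_ ?_ j
      · exact h0mem
      · intro i; rw [hs'succ]; exact humem i
    have hmon : Monotone s' := by
      rw [Fin.monotone_iff_le_succ]
      intro j
      refine Fin.cases ?_ ?_ j
      · rw [Fin.castSucc_zero, hs'0, hs'succ]
        exact (humem 0).1
      · intro k
        rw [← Fin.succ_castSucc, hs'succ, hs'succ]
        refine Fin.lastCases ?_ ?_ k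
        · rw [Fin.succ_last]
          simpa [hu] using (h1 (Fin.last n)).2
        · intro i
          rw [Fin.succ_castSucc]
          simpa [hu, -Fin.castSucc_succ, Fin.succ_castSucc] using h2 (Fin.castSucc_lt_succ (i := i)).le
    have hstep : c + lam * ∑ i : Fin n, alphaE (K (s i.castSucc)) (K (s i.succ))
        ≤ ∑ j : Fin (n+2), dd lam (K (s' j.castSucc)) (K (s' j.succ)) := by
      rw [hsplit (n+2) s' hmem hmon]
      have hlast : s' (Fin.last (n+2)) = t := by
        have : Fin.last (n+2) = (Fin.last (n+1)).succ := (Fin.succ_last _).symm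
        rw [this, hs'succ]; simp [hu]
      rw [hlast, hs'0]
      refine add_le_add_right (mul_le_mul_right ?_ _) _
      -- original α-sum is a subsum of the extended one
      have key : ∀ i : Fin n, alphaE (K (s i.castSucc)) (K (s i.succ))
          = alphaE (K (s' (i.castSucc.succ).castSucc)) (K (s' (i.castSucc.succ).succ)) := by
        intro i
        have e1 : s' (i.castSucc.succ).castSucc = s i.castSucc := by
          rw [← Fin.succ_castSucc, hs'succ]
          simp [hu]
        have e2 : s' (i.castSucc.succ).succ = s i.succ := by
          rw [hs'succ, Fin.succ_castSucc]
          simp [hu, -Fin.castSucc_succ]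
        rw [e1, e2]
      calc ∑ i : Fin n, alphaE (K (s i.castSucc)) (K (s i.succ))
          ≤ ∑ j : Fin (n+1), alphaE (K (s' (j.succ).castSucc)) (K (s' (j.succ).succ)) := by
            rw [Fin.sum_univ_castSucc (f := fun j : Fin (n+1) =>
              alphaE (K (s' (j.succ).castSucc)) (K (s' (j.succ).succ)))]
            exact le_add_of_le_of_nonneg
              (le_of_eq (Finset.sum_congr rfl fun i _ => key i)) zero_le'
        _ ≤ ∑ j : Fin (n+2), alphaE (K (s' j.castSucc)) (K (s' j.succ)) := by
            rw [Fin.sum_univ_succ (f := fun j : Fin (n+2) =>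
              alphaE (K (s' j.castSucc)) (K (s' j.succ)))]
            exact le_add_self
    exact hstep.trans (sum_le_VarOn _ _ _ hmem hmon)
end
end

section
/- Let $E \subseteq \mathbb{R}$ be a nonempty compact set with $E^- = \min E$, $E^+ = \max E$, and let $\mathscr{H}(E)$ be the collection of connected components of $[E^-,E^+] \setminus E$ (the 'gaps' of $E$, each an open interval $I$ with endpoints $I^-, I^+ \in E$). Let $\vartheta : E \to \mathcal{K}_{\mathrm{fin}}(\overline\Omega)$ be continuous with respect to Hausdorff distance, monotone ($\vartheta(s_0) \subseteq \vartheta(s_1)$ for $s_0 \le s_1$ in $E$), and uniformly continuous with respect to $\mathsf{d}$ in the one-sided sense: for every $\varepsilon>0$ there is $\eta>0$ such that $\mathsf{d}(\vartheta(s_0),\vartheta(s_1)) \le \varepsilon$ whenever $s_0 \le s_1 \le s_0+\eta$ in $E$. Then the $\alpha$-total variation of $\vartheta$ over $E$ equals the sum over the gaps: $\mathrm{Var}_\alpha(\vartheta, E) = \sum_{I \in \mathscr{H}(E)} \alpha(\vartheta(I^-), \vartheta(I^+))$. -/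
open Set MeasureTheory Metric Filter
open scoped ENNReal NNReal
open Classical

noncomputable section

/-- The set of gaps (connected components of `[min E, max E] \ E`) of a compact `E ⊆ ℝ`. -/
def Gaps (E : Set ℝ) : Set (Set ℝ) :=
  {I | ∃ x ∈ Set.Icc (sInf E) (sSup E) \ E,
    I = connectedComponentIn (Set.Icc (sInf E) (sSup E) \ E) x}

lemma alphaN_triangle {X : Type*} [TopologicalSpace X] {H M K : Set X}
    (h1 : H ⊆ M) (h2 : M ⊆ K) : alphaN H K ≤ alphaN H M + alphaN M K := by
  rw [alphaN, alphaN, alphaN, if_pos (h1.trans h2), if_pos h1, if_pos h2]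
  set A := {C | C ∈ comps K ∧ Disjoint C H} with hA
  set B1 := {C | C ∈ comps M ∧ Disjoint C H} with hB1
  set B2 := {C | C ∈ comps K ∧ Disjoint C M} with hB2
  classical
  let f : Set X → Set X := fun C =>
    if h : (C ∩ M).Nonempty then connectedComponentIn M h.choose else C
  -- basic facts
  have hcomp_eq : ∀ C ∈ comps K, ∀ y ∈ C, C = connectedComponentIn K y := by
    rintro C ⟨x, hx, rfl⟩ y hy
    exact connectedComponentIn_eq hy
  have hf1 : ∀ C ∈ A, (C ∩ M).Nonempty → f C ⊆ C ∧ (f C ∩ M).Nonempty ∧ f C ∈ B1 := by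
    rintro C ⟨hCc, hCd⟩ hne
    have hy := hne.choose_spec
    have hyC : hne.choose ∈ C := hy.1
    have hyM : hne.choose ∈ M := hy.2
    have hfC : f C = connectedComponentIn M hne.choose := by simp only [f, dif_pos hne]
    have hsub : f C ⊆ C := by
      have hmm := connectedComponentIn_mono hne.choose h2
      rw [← hcomp_eq C hCc _ hyC] at hmm
      rw [hfC]; exact hmm
    refine ⟨hsub, ⟨hne.choose, ?_, hyM⟩, ?_⟩
    · rw [hfC]; exact mem_connectedComponentIn hyM
    · exact ⟨⟨hne.choose, hyM, hfC⟩, Set.disjoint_left.2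
        fun a ha => Set.disjoint_left.1 hCd (hsub ha)⟩
  have hf2 : ∀ C, ¬(C ∩ M).Nonempty → f C = C := by
    intro C h; simp only [f, dif_neg h]
  have hinj : Set.InjOn f A := by
    intro C hC C' hC' hfe
    by_cases h : (C ∩ M).Nonempty <;> by_cases h' : (C' ∩ M).Nonempty
    · obtain ⟨hs, hne, _⟩ := hf1 C hC h
      obtain ⟨hs', _, _⟩ := hf1 C' hC' h'
      obtain ⟨y, hy1, _⟩ := hne
      have hyC : y ∈ C := hs hy1
      have hyC' : y ∈ C' := hs' (hfe ▸ hy1)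
      rw [hcomp_eq C hC.1 y hyC, hcomp_eq C' hC'.1 y hyC']
    · exfalso
      obtain ⟨hs, hne, _⟩ := hf1 C hC h
      obtain ⟨y, hy1, hy2⟩ := hne
      rw [hfe, hf2 C' h'] at hy1
      exact h' ⟨y, hy1, hy2⟩
    · exfalso
      obtain ⟨hs, hne, _⟩ := hf1 C' hC' h'
      obtain ⟨y, hy1, hy2⟩ := hne
      rw [← hfe, hf2 C h] at hy1
      exact h ⟨y, hy1, hy2⟩
    · rw [← hf2 C h, ← hf2 C' h', hfe]
  have himg : f '' A ⊆ B1 ∪ B2 := by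
    rintro _ ⟨C, hC, rfl⟩
    by_cases h : (C ∩ M).Nonempty
    · exact Or.inl (hf1 C hC h).2.2
    · rw [hf2 C h]
      exact Or.inr ⟨hC.1, Set.disjoint_iff_inter_eq_empty.2
        (Set.not_nonempty_iff_eq_empty.1 h)⟩
  calc A.encard = (f '' A).encard := (hinj.encard_image).symm
    _ ≤ (B1 ∪ B2).encard := Set.encard_le_encard himg
    _ ≤ B1.encard + B2.encard := Set.encard_union_le _ _

lemma alphaE_triangle {X : Type*} [TopologicalSpace X] {H M K : Set X}
    (h1 : H ⊆ M) (h2 : M ⊆ K) : alphaE H K ≤ alphaE H M + alphaE M K := by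
  rw [alphaE, alphaE, alphaE, ← ENat.toENNReal_add]
  exact ENat.toENNReal_le.2 (alphaN_triangle h1 h2)

lemma comp_eq_Ioo {E : Set ℝ} (hE : IsCompact E) (hEne : E.Nonempty)
    {a b x : ℝ} (ha : a ∈ E) (hb : b ∈ E) (hgap : Ioo a b ∩ E = ∅)
    (hx : x ∈ Ioo a b) :
    connectedComponentIn (Set.Icc (sInf E) (sSup E) \ E) x = Ioo a b := by
  have hbdd := hE.bddAbove
  have hbdd' := hE.bddBelow
  have hIa : sInf E ≤ a := csInf_le hbdd' ha
  have hIb : b ≤ sSup E := le_csSup hbdd hb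
  set S := Set.Icc (sInf E) (sSup E) \ E with hS
  have hsub : Ioo a b ⊆ S := by
    intro y hy
    refine ⟨⟨hIa.trans hy.1.le, hy.2.le.trans hIb⟩, fun hyE => ?_⟩
    exact absurd (Set.mem_inter hy hyE) (by rw [hgap]; exact notMem_empty y)
  have h1 : Ioo a b ⊆ connectedComponentIn S x :=
    isPreconnected_Ioo.subset_connectedComponentIn hx hsub
  refine le_antisymm ?_ h1
  have hpc : IsPreconnected (connectedComponentIn S x) := isPreconnected_connectedComponentIn
  have hoc : Set.OrdConnected (connectedComponentIn S x) := hpc.ordConnected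
  have hxm : x ∈ connectedComponentIn S x := mem_connectedComponentIn (hsub hx)
  have hcs : connectedComponentIn S x ⊆ S := connectedComponentIn_subset _ _
  intro y hy
  constructor
  · by_contra hya
    push_neg at hya
    have : a ∈ Set.Icc y x := ⟨hya, hx.1.le⟩
    have := hoc.out hy hxm this
    exact (hcs this).2 ha
  · by_contra hyb
    push_neg at hyb
    have : b ∈ Set.Icc x y := ⟨hx.2.le, hyb⟩
    have := hoc.out hxm hy this
    exact (hcs this).2 hb

lemma gap_mem {E : Set ℝ} (hE : IsCompact E) (hEne : E.Nonempty)
    {a b : ℝ} (ha : a ∈ E) (hb : b ∈ E) (hab : a < b) (hgap : Ioo a b ∩ E = ∅) :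
    Ioo a b ∈ Gaps E := by
  have hx : (a + b) / 2 ∈ Ioo a b := ⟨by linarith, by linarith⟩
  refine ⟨(a+b)/2, ⟨⟨(csInf_le hE.bddBelow ha).trans hx.1.le,
    hx.2.le.trans (le_csSup hE.bddAbove hb)⟩, fun hmE => ?_⟩,
    (comp_eq_Ioo hE hEne ha hb hgap hx).symm⟩
  exact absurd (Set.mem_inter hx hmE) (by rw [hgap]; exact notMem_empty _)

lemma gap_struct {E : Set ℝ} (hE : IsCompact E) (hEne : E.Nonempty)
    {I : Set ℝ} (hI : I ∈ Gaps E) :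
    ∃ a b : ℝ, a ∈ E ∧ b ∈ E ∧ a < b ∧ I = Ioo a b ∧ Ioo a b ∩ E = ∅ := by
  obtain ⟨x, ⟨hxIcc, hxE⟩, rfl⟩ := hI
  have h1 : (E ∩ Iic x).Nonempty := ⟨sInf E, hE.sInf_mem hEne, hxIcc.1⟩
  have h2 : (E ∩ Ici x).Nonempty := ⟨sSup E, hE.sSup_mem hEne, hxIcc.2⟩
  have hc1 : IsCompact (E ∩ Iic x) := hE.inter_right isClosed_Iic
  have hc2 : IsCompact (E ∩ Ici x) := hE.inter_right isClosed_Ici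
  set a := sSup (E ∩ Iic x) with hadef
  set b := sInf (E ∩ Ici x) with hbdef
  have haM : a ∈ E ∩ Iic x := hc1.sSup_mem h1
  have hbM : b ∈ E ∩ Ici x := hc2.sInf_mem h2
  have hax : a < x := lt_of_le_of_ne haM.2 (fun h => hxE (h ▸ haM.1))
  have hxb : x < b := lt_of_le_of_ne hbM.2 (fun h => hxE (by rw [h]; exact hbM.1))
  have hgap : Ioo a b ∩ E = ∅ := by
    ext y
    simp only [Set.mem_inter_iff, Set.mem_Ioo, Set.mem_empty_iff_false, iff_false, not_and]
    rintro ⟨hy1, hy2⟩ hyE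
    rcases le_or_gt y x with h | h
    · exact absurd (le_csSup hc1.bddAbove ⟨hyE, h⟩) (not_le.2 hy1)
    · exact absurd (csInf_le hc2.bddBelow ⟨hyE, h.le⟩) (not_le.2 hy2)
  exact ⟨a, b, haM.1, hbM.1, hax.trans hxb,
    comp_eq_Ioo hE hEne haM.1 hbM.1 hgap ⟨hax, hxb⟩, hgap⟩

lemma alpha_zero_of_dd_lt {lam : ℝ≥0∞} {H K : Set Plane} {c : ℝ≥0∞}
    (h : dd lam H K ≤ c) (hc : c < lam) : alphaE H K = 0 := by
  have hHK : H ⊆ K := by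
    by_contra hn
    rw [dd, if_neg hn, top_le_iff] at h
    exact not_top_lt (h ▸ hc)
  rw [dd, if_pos hHK] at h
  have h2 : lam * alphaE H K ≤ c := le_trans le_add_self h
  suffices hz : alphaN H K = 0 by simp [alphaE, hz]
  by_contra hne
  have h1 : (1 : ℝ≥0∞) ≤ alphaE H K := by
    rw [alphaE, ← ENat.toENNReal_one]
    exact ENat.toENNReal_le.2 (ENat.one_le_iff_ne_zero.2 hne)
  have : lam ≤ c := by
    calc lam = lam * 1 := (mul_one lam).symm
    _ ≤ lam * alphaE H K := mul_le_mul_right h1 lam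
    _ ≤ c := h2
  exact absurd hc (not_lt.2 this)

lemma gaps_sInf_inj {E : Set ℝ} (hE : IsCompact E) (hEne : E.Nonempty)
    {I J : Set ℝ} (hI : I ∈ Gaps E) (hJ : J ∈ Gaps E) (h : sInf I = sInf J) : I = J := by
  obtain ⟨a, b, haE, hbE, hab, rfl, hg⟩ := gap_struct hE hEne hI
  obtain ⟨a', b', haE', hbE', hab', rfl, hg'⟩ := gap_struct hE hEne hJ
  rw [csInf_Ioo hab, csInf_Ioo hab'] at h
  subst h
  rcases lt_trichotomy b b' with hbb | hbb | hbb
  · exfalso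
    have hm : b ∈ Ioo a b' ∩ E := ⟨⟨hab, hbb⟩, hbE⟩
    rw [hg'] at hm
    exact hm
  · rw [hbb]
  · exfalso
    have hm : b' ∈ Ioo a b ∩ E := ⟨⟨hab', hbb⟩, hbE'⟩
    rw [hg] at hm
    exact hm

/-- The `α`-total variation of an admissible transition curve is concentrated on the
gaps of its (compact) domain. -/
theorem stmt_15 (Ω : Set Plane) (hΩ : Bornology.IsBounded Ω)
    (lam : ℝ≥0∞) (hlam : 0 < lam) (hlam' : lam ≠ ⊤)
    (E : Set ℝ) (hE : IsCompact E) (hEne : E.Nonempty)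
    (θ : ℝ → Set Plane)
    (hcomp : ∀ s ∈ E, IsCompact (θ s))
    (hsubΩ : ∀ s ∈ E, θ s ⊆ closure Ω)
    (hfinH : ∀ s ∈ E, μH[1] (θ s) < ⊤)
    (hfinC : ∀ s ∈ E, alphaN ∅ (θ s) < ⊤)
    (hmono : ∀ s₀ ∈ E, ∀ s₁ ∈ E, s₀ ≤ s₁ → θ s₀ ⊆ θ s₁)
    (hcont : ∀ s ∈ E, Tendsto (fun r => hausdorffDist (θ r) (θ s)) (nhdsWithin s E) (nhds 0))
    (hdcont : ∀ ε > (0:ℝ), ∃ η > (0:ℝ), ∀ s₀ ∈ E, ∀ s₁ ∈ E,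
      s₀ ≤ s₁ → s₁ ≤ s₀ + η → dd lam (θ s₀) (θ s₁) ≤ ENNReal.ofReal ε) :
    VarOn alphaE θ E = ∑' I : Gaps E, alphaE (θ (sInf I.1)) (θ (sSup I.1)) := by
  -- choose ε and η
  have htR : 0 < lam.toReal := ENNReal.toReal_pos hlam.ne' hlam'
  obtain ⟨η, hη, hηp⟩ := hdcont (lam.toReal / 2) (by linarith)
  have hεlt : ENNReal.ofReal (lam.toReal / 2) < lam := by
    calc ENNReal.ofReal (lam.toReal / 2) < ENNReal.ofReal lam.toReal :=
      (ENNReal.ofReal_lt_ofReal_iff htR).2 (by linarith)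
    _ = lam := ENNReal.ofReal_toReal hlam'
  have key0 : ∀ s₀ ∈ E, ∀ s₁ ∈ E, s₀ ≤ s₁ → s₁ ≤ s₀ + η → alphaE (θ s₀) (θ s₁) = 0 :=
    fun s₀ h0 s₁ h1 h2 h3 => alpha_zero_of_dd_lt (hηp s₀ h0 s₁ h1 h2 h3) hεlt
  set f : ↑(Gaps E) → ℝ≥0∞ := fun I => alphaE (θ (sInf I.1)) (θ (sSup I.1)) with hf
  set G : ℝ → ℝ → ℝ≥0∞ :=
    fun p q => ∑' I : ↑(Gaps E), if I.1 ⊆ Ioo p q then f I else 0 with hG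
  have Gmono : ∀ {p q p' q' : ℝ}, p' ≤ p → q ≤ q' → G p q ≤ G p' q' := by
    intro p q p' q' hp hq
    apply ENNReal.tsum_le_tsum
    intro I
    split_ifs with h h'
    · exact le_refl _
    · exact absurd (h.trans (Ioo_subset_Ioo hp hq)) h'
    · exact zero_le
    · exact le_refl _
  -- the key step estimate
  have step : ∀ n : ℕ, ∀ s₀, s₀ ∈ E → ∀ s₁, s₁ ∈ E → s₀ ≤ s₁ → s₁ ≤ s₀ + (n : ℝ) * η →
      alphaE (θ s₀) (θ s₁) ≤ G s₀ s₁ := by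
    intro n
    induction n with
    | zero =>
      intro s₀ h0 s₁ h1 h01 hb
      rw [key0 s₀ h0 s₁ h1 h01 (by push_cast at hb; linarith)]
      exact zero_le
    | succ n ih =>
      intro s₀ h0 s₁ h1 h01 hb
      by_cases hcase : s₁ ≤ s₀ + η
      · rw [key0 s₀ h0 s₁ h1 h01 hcase]; exact zero_le
      push_neg at hcase
      set w := sSup (E ∩ Icc s₀ (s₀ + η)) with hw
      have hcw : IsCompact (E ∩ Icc s₀ (s₀ + η)) := hE.inter_right isClosed_Icc
      have hnew : (E ∩ Icc s₀ (s₀+η)).Nonempty := ⟨s₀, h0, le_refl _, by linarith⟩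
      have hwM := hcw.sSup_mem hnew
      have hwE : w ∈ E := hwM.1
      have hs₀w : s₀ ≤ w := hwM.2.1
      have hwη : w ≤ s₀ + η := hwM.2.2
      have hws₁ : w ≤ s₁ := hwη.trans hcase.le
      have hzero1 : alphaE (θ s₀) (θ w) = 0 := key0 s₀ h0 w hwE hs₀w hwη
      have hnogap : E ∩ Ioc w (s₀ + η) = ∅ := by
        ext y
        simp only [mem_inter_iff, mem_Ioc, mem_empty_iff_false, iff_false, not_and]
        intro hyE hy1 hy2
        exact absurd (le_csSup hcw.bddAbove ⟨hyE, by constructor <;> linarith⟩)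
          (not_le.2 hy1)
      by_cases hwcase : w = s₀ + η
      · have hstep : alphaE (θ w) (θ s₁) ≤ G w s₁ :=
          ih w hwE s₁ h1 hws₁ (by push_cast at hb ⊢; rw [hwcase]; linarith)
        calc alphaE (θ s₀) (θ s₁)
            ≤ alphaE (θ s₀) (θ w) + alphaE (θ w) (θ s₁) :=
              alphaE_triangle (hmono s₀ h0 w hwE hs₀w) (hmono w hwE s₁ h1 hws₁)
          _ = alphaE (θ w) (θ s₁) := by rw [hzero1, zero_add]
          _ ≤ G w s₁ := hstep
          _ ≤ G s₀ s₁ := Gmono hs₀w (le_refl _)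
      · have hwlt : w < s₀ + η := lt_of_le_of_ne hwη hwcase
        set v := sInf (E ∩ Icc (s₀ + η) s₁) with hv
        have hcv : IsCompact (E ∩ Icc (s₀ + η) s₁) := hE.inter_right isClosed_Icc
        have hnev : (E ∩ Icc (s₀+η) s₁).Nonempty := ⟨s₁, h1, hcase.le, le_refl _⟩
        have hvM := hcv.sInf_mem hnev
        have hvE : v ∈ E := hvM.1
        have hηv : s₀ + η ≤ v := hvM.2.1
        have hvs₁ : v ≤ s₁ := hvM.2.2
        have hwv : w < v := lt_of_lt_of_le hwlt hηv
        have hgapwv : Ioo w v ∩ E = ∅ := by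
          ext y
          simp only [mem_inter_iff, mem_Ioo, mem_empty_iff_false, iff_false, not_and]
          intro hy hyE
          obtain ⟨hy1, hy2⟩ := hy
          rcases le_or_gt y (s₀ + η) with h | h
          · have hm : y ∈ E ∩ Ioc w (s₀+η) := ⟨hyE, hy1, h⟩
            rw [hnogap] at hm
            exact hm
          · exact absurd (csInf_le hcv.bddBelow ⟨hyE, h.le, by linarith⟩) (not_le.2 hy2)
        have hI₀ : Ioo w v ∈ Gaps E := gap_mem hE hEne hwE hvE hwv hgapwv
        set I₀ : ↑(Gaps E) := ⟨Ioo w v, hI₀⟩ with hI₀def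
        have hfI₀ : f I₀ = alphaE (θ w) (θ v) := by
          simp only [hf]
          rw [csInf_Ioo hwv, csSup_Ioo hwv]
        have hrec : alphaE (θ v) (θ s₁) ≤ G v s₁ :=
          ih v hvE s₁ h1 hvs₁ (by push_cast at hb ⊢; linarith)
        have htri : alphaE (θ s₀) (θ s₁) ≤ f I₀ + alphaE (θ v) (θ s₁) := by
          calc alphaE (θ s₀) (θ s₁)
              ≤ alphaE (θ s₀) (θ v) + alphaE (θ v) (θ s₁) :=
                alphaE_triangle (hmono s₀ h0 v hvE (by linarith)) (hmono v hvE s₁ h1 hvs₁)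
            _ ≤ (alphaE (θ s₀) (θ w) + alphaE (θ w) (θ v)) + alphaE (θ v) (θ s₁) :=
                add_le_add_left (alphaE_triangle (hmono s₀ h0 w hwE hs₀w)
                  (hmono w hwE v hvE hwv.le)) _
            _ = f I₀ + alphaE (θ v) (θ s₁) := by rw [hzero1, zero_add, hfI₀]
        refine htri.trans ?_
        have hcoe : (I₀ : Set ℝ) = Ioo w v := rfl
        have hpt : ∀ I : ↑(Gaps E),
            (if I = I₀ then f I₀ else 0) + (if I.1 ⊆ Ioo v s₁ then f I else 0) ≤
            (if I.1 ⊆ Ioo s₀ s₁ then f I else 0) := by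
          intro I
          by_cases hII : I = I₀
          · have hns : ¬ ((I₀ : Set ℝ) ⊆ Ioo v s₁) := by
              rw [hcoe]
              intro hsub
              have hm : (w+v)/2 ∈ Ioo w v := ⟨by linarith, by linarith⟩
              have h2 := (hsub hm).1
              linarith [hm.2]
            have hyes : (I₀ : Set ℝ) ⊆ Ioo s₀ s₁ := by
              rw [hcoe]
              rintro y ⟨hya, hyb⟩
              exact ⟨by linarith, by linarith⟩
            rw [hII, if_pos rfl, if_neg hns, if_pos hyes, add_zero]
          · rw [if_neg hII, zero_add]
            have hsub : Ioo v s₁ ⊆ Ioo s₀ s₁ := Ioo_subset_Ioo (by linarith) (le_refl _)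
            split_ifs with h h'
            · exact le_refl _
            · exact absurd (h.trans hsub) h'
            · exact zero_le
            · exact le_refl _
        calc f I₀ + alphaE (θ v) (θ s₁)
            ≤ f I₀ + G v s₁ := add_le_add_right hrec _
          _ = ∑' I : ↑(Gaps E), ((if I = I₀ then f I₀ else 0) +
                (if I.1 ⊆ Ioo v s₁ then f I else 0)) := by
              rw [ENNReal.tsum_add, tsum_ite_eq I₀ (fun _ => f I₀)]
          _ ≤ ∑' I : ↑(Gaps E), (if I.1 ⊆ Ioo s₀ s₁ then f I else 0) :=
              ENNReal.tsum_le_tsum hpt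
          _ = G s₀ s₁ := rfl
  -- the chain construction for the lower bound
  have chain : ∀ m : ℕ, ∀ s : Finset ↑(Gaps E), s.card = m → ∀ c, c ∈ E →
      (∀ I ∈ s, sSup (I : Set ℝ) ≤ c) →
      ∃ n : ℕ, ∃ t : Fin (n+1) → ℝ, (∀ i, t i ∈ E) ∧ Monotone t ∧ t (Fin.last n) = c ∧
        ∑ I ∈ s, f I ≤ ∑ i : Fin n, alphaE (θ (t i.castSucc)) (θ (t i.succ)) := by
    intro m
    induction m with
    | zero =>
      intro s hs c hc _
      refine ⟨0, fun _ => c, fun _ => hc, monotone_const, rfl, ?_⟩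
      rw [Finset.card_eq_zero.1 hs]
      simp
    | succ m ih =>
      intro s hs c hcE hbnd
      have hsne : s.Nonempty := Finset.card_pos.1 (hs ▸ Nat.succ_pos m)
      obtain ⟨Imax, hImax, hmax⟩ := Finset.exists_max_image s (fun I => sInf (I : Set ℝ)) hsne
      obtain ⟨a, b, haE, hbE, hab, hIoo, hgap⟩ := gap_struct hE hEne Imax.2
      have hsInfm : sInf (Imax : Set ℝ) = a := by rw [hIoo]; exact csInf_Ioo hab
      have hsSupm : sSup (Imax : Set ℝ) = b := by rw [hIoo]; exact csSup_Ioo hab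
      have hbc : b ≤ c := hsSupm ▸ hbnd Imax hImax
      set s' := s.erase Imax with hs'def
      have hs' : s'.card = m := by
        rw [hs'def, Finset.card_erase_of_mem hImax, hs]
        rfl
      have hbnd' : ∀ I ∈ s', sSup (I : Set ℝ) ≤ a := by
        intro I hI'
        have hIs : I ∈ s := Finset.mem_of_mem_erase hI'
        have hne : I ≠ Imax := Finset.ne_of_mem_erase hI'
        obtain ⟨a', b', haE', hbE', hab', hIoo', hgap'⟩ := gap_struct hE hEne I.2
        have hsInf' : sInf (I : Set ℝ) = a' := by rw [hIoo']; exact csInf_Ioo hab'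
        have hsSup' : sSup (I : Set ℝ) = b' := by rw [hIoo']; exact csSup_Ioo hab'
        have hlea : a' ≤ a := by
          have := hmax I hIs
          rw [hsInf', hsInfm] at this
          exact this
        have hlt : a' < a := by
          rcases lt_or_eq_of_le hlea with h | h
          · exact h
          · exact absurd (Subtype.ext (gaps_sInf_inj hE hEne I.2 Imax.2
              (by rw [hsInf', hsInfm, h]))) hne
        rw [hsSup']
        by_contra hb'
        push_neg at hb'
        have hm : a ∈ Ioo a' b' ∩ E := ⟨⟨hlt, hb'⟩, haE⟩
        rw [hgap'] at hm
        exact hm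
      obtain ⟨n, t', hmem', hmono', hlast', hsum'⟩ := ih s' hs' a haE hbnd'
      set t : Fin (n+3) → ℝ := fun i =>
        if h : (i : ℕ) < n + 1 then t' ⟨i, h⟩ else if (i : ℕ) = n + 1 then b else c
        with htdef
      have ht_lt : ∀ (i : Fin (n+3)) (h : (i:ℕ) < n+1), t i = t' ⟨i, h⟩ := by
        intro i h
        simp only [htdef]
        rw [dif_pos h]
      have ht_eq : ∀ (i : Fin (n+3)), (i:ℕ) = n+1 → t i = b := by
        intro i h
        simp only [htdef]
        rw [dif_neg (by omega), if_pos h]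
      have ht_gt : ∀ (i : Fin (n+3)), (i:ℕ) = n+2 → t i = c := by
        intro i h
        simp only [htdef]
        rw [dif_neg (by omega), if_neg (by omega)]
      have ht_le_a : ∀ (i : Fin (n+3)) (h : (i:ℕ) < n+1), t i ≤ a := by
        intro i h
        rw [ht_lt i h, ← hlast']
        exact hmono' (Fin.le_last _)
      have hmemt : ∀ i, t i ∈ E := by
        intro i
        rcases Nat.lt_or_ge (i:ℕ) (n+1) with h | h
        · rw [ht_lt i h]; exact hmem' _
        · rcases (show (i:ℕ) = n+1 ∨ (i:ℕ) = n+2 by omega) with h | h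
          · rw [ht_eq i h]; exact hbE
          · rw [ht_gt i h]; exact hcE
      have hmonot : Monotone t := by
        intro i j hij
        have hij' : (i:ℕ) ≤ (j:ℕ) := hij
        rcases Nat.lt_or_ge (i:ℕ) (n+1) with hi | hi
        · rcases Nat.lt_or_ge (j:ℕ) (n+1) with hj | hj
          · rw [ht_lt i hi, ht_lt j hj]
            exact hmono' (Fin.mk_le_mk.2 hij')
          · have hja : t i ≤ a := ht_le_a i hi
            rcases (show (j:ℕ) = n+1 ∨ (j:ℕ) = n+2 by omega) with h | h
            · rw [ht_eq j h]; exact hja.trans hab.le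
            · rw [ht_gt j h]; exact hja.trans (hab.le.trans hbc)
        · rcases (show (i:ℕ) = n+1 ∨ (i:ℕ) = n+2 by omega) with h | h
          · rw [ht_eq i h]
            rcases (show (j:ℕ) = n+1 ∨ (j:ℕ) = n+2 by omega) with h' | h'
            · rw [ht_eq j h']
            · rw [ht_gt j h']; exact hbc
          · rw [ht_gt i h, ht_gt j (by omega)]
      refine ⟨n + 2, t, hmemt, hmonot, ht_gt _ rfl, ?_⟩
      set g : Fin (n+2) → ℝ≥0∞ := fun i => alphaE (θ (t i.castSucc)) (θ (t i.succ)) with hgdef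
      have hterm : ∀ i : Fin n, g (i.castSucc.castSucc) =
          alphaE (θ (t' i.castSucc)) (θ (t' i.succ)) := by
        intro i
        have h1 : t (i.castSucc.castSucc.castSucc) = t' i.castSucc := by
          rw [ht_lt _ (by simp only [Fin.coe_castSucc]; omega)]
          apply congrArg t'
          ext
          simp
        have h2 : t (i.castSucc.castSucc.succ) = t' i.succ := by
          rw [ht_lt _ (by simp only [Fin.val_succ, Fin.coe_castSucc]; omega)]
          apply congrArg t'
          ext
          simp
        simp only [hgdef, h1, h2]
      have htermmax : g ((Fin.last n).castSucc) = f Imax := by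
        have h1 : t ((Fin.last n).castSucc.castSucc) = a := by
          rw [ht_lt _ (by simp only [Fin.coe_castSucc, Fin.val_last]; omega), ← hlast']
          apply congrArg t'
          ext
          simp
        have h2 : t ((Fin.last n).castSucc.succ) = b :=
          ht_eq _ (by simp only [Fin.val_succ, Fin.coe_castSucc, Fin.val_last])
        simp only [hgdef, h1, h2, hf, hsInfm, hsSupm]
      calc ∑ I ∈ s, f I = ∑ I ∈ s', f I + f Imax := (Finset.sum_erase_add s _ hImax).symm
        _ ≤ (∑ i : Fin n, g (i.castSucc.castSucc)) + f Imax := by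
            refine add_le_add_left (hsum'.trans (le_of_eq ?_)) _
            exact Finset.sum_congr rfl fun i _ => (hterm i).symm
        _ = ∑ i : Fin (n+1), g i.castSucc := by
            rw [Fin.sum_univ_castSucc (fun i : Fin (n+1) => g i.castSucc), htermmax]
        _ ≤ ∑ i : Fin (n+2), g i := by
            rw [Fin.sum_univ_castSucc g]
            exact le_self_add
  -- conclude
  rw [VarOn]
  apply le_antisymm
  · refine iSup_le fun n => iSup_le fun t => iSup_le fun hmem => iSup_le fun hmt => ?_
    have hstepsum : ∀ i : Fin n, alphaE (θ (t i.castSucc)) (θ (t i.succ)) ≤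
        G (t i.castSucc) (t i.succ) := by
      intro i
      have hle : t i.castSucc ≤ t i.succ := hmt (Fin.castSucc_lt_succ (i := i)).le
      obtain ⟨m, hm⟩ := exists_nat_ge ((t i.succ - t i.castSucc) / η)
      refine step m _ (hmem _) _ (hmem _) hle ?_
      rw [div_le_iff₀ hη] at hm
      linarith
    have huniq : ∀ I : ↑(Gaps E), ∀ i j : Fin n,
        (I : Set ℝ) ⊆ Ioo (t i.castSucc) (t i.succ) →
        (I : Set ℝ) ⊆ Ioo (t j.castSucc) (t j.succ) → i = j := by
      intro I i j hi hj
      obtain ⟨a, b, -, -, hab, hIoo, -⟩ := gap_struct hE hEne I.2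
      have hx : (a+b)/2 ∈ (I : Set ℝ) := by
        rw [hIoo]
        exact ⟨by linarith, by linarith⟩
      by_contra hne
      rcases lt_or_gt_of_ne hne with h | h
      · have h1 : (i.succ : Fin (n+1)) ≤ j.castSucc := by
          simp only [Fin.le_def, Fin.lt_def, Fin.val_succ, Fin.coe_castSucc] at h ⊢
          omega
        have := (hi hx).2.trans_le ((hmt h1).trans (hj hx).1.le)
        exact lt_irrefl _ this
      · have h1 : (j.succ : Fin (n+1)) ≤ i.castSucc := by
          simp only [Fin.le_def, Fin.lt_def, Fin.val_succ, Fin.coe_castSucc] at h ⊢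
          omega
        have := (hj hx).2.trans_le ((hmt h1).trans (hi hx).1.le)
        exact lt_irrefl _ this
    calc ∑ i : Fin n, alphaE (θ (t i.castSucc)) (θ (t i.succ))
        ≤ ∑ i : Fin n, G (t i.castSucc) (t i.succ) :=
          Finset.sum_le_sum fun i _ => hstepsum i
      _ = ∑' I : ↑(Gaps E), ∑ i : Fin n,
            (if (I : Set ℝ) ⊆ Ioo (t i.castSucc) (t i.succ) then f I else 0) :=
          (Summable.tsum_finsetSum fun i _ => ENNReal.summable).symm
      _ ≤ ∑' I : ↑(Gaps E), f I := by
          refine ENNReal.tsum_le_tsum fun I => ?_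
          classical
          have hcard : (Finset.univ.filter (fun i : Fin n =>
              (I : Set ℝ) ⊆ Ioo (t i.castSucc) (t i.succ))).card ≤ 1 :=
            Finset.card_le_one.2 fun i hi j hj => huniq I i j
              (Finset.mem_filter.1 hi).2 (Finset.mem_filter.1 hj).2
          rw [← Finset.sum_filter, Finset.sum_const]
          rcases Nat.le_one_iff_eq_zero_or_eq_one.1 hcard with h | h
          · rw [h, zero_smul]
            exact zero_le
          · rw [h, one_smul]
      _ = ∑' I : ↑(Gaps E), alphaE (θ (sInf (I : Set ℝ))) (θ (sSup (I : Set ℝ))) := rfl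
  · rw [ENNReal.tsum_eq_iSup_sum]
    refine iSup_le fun s => ?_
    have hbnd : ∀ I ∈ s, sSup (I : Set ℝ) ≤ sSup E := by
      intro I _
      obtain ⟨a, b, -, hbE, hab, hIoo, -⟩ := gap_struct hE hEne I.2
      rw [hIoo, csSup_Ioo hab]
      exact le_csSup hE.bddAbove hbE
    obtain ⟨n, t, hmem, hmt, -, hsum⟩ := chain s.card s rfl (sSup E) (hE.sSup_mem hEne) hbnd
    refine le_trans hsum ?_
    refine le_iSup_of_le n ?_
    refine le_iSup_of_le t ?_
    refine le_iSup_of_le hmem ?_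
    exact le_iSup_of_le hmt (le_refl _)
end
end
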